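/- Under conditional independence of p_s and p_q given the label y and the no-worse-than-random assumption, the fraction of false positives satisfies E[p_s p_q (1-y)] ≤ E[p_s | p_q=0] · E[p_q | p_s=0] =: D, and consequently the fraction of true positives satisfies E[p_s p_q y] ≥ E[p_s p_q] − D. -/

import Mathlib

open Finset

/-- Expectation of `f` under weights `w` on a finite sample space. -/
noncomputable def ev {Ω : Type*} [Fintype Ω] (w f : Ω → ℝ) : ℝ := ∑ x, w x * f x

lemma ev_nonneg {Ω : Type*} [Fintype Ω] {w f : Ω → ℝ} (hw : ∀ x, 0 ≤ w x)
    (hf : ∀ x, 0 ≤ f x) : 0 ≤ ev w f :=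
  Finset.sum_nonneg fun x _ => mul_nonneg (hw x) (hf x)

lemma ev_split {Ω : Type*} [Fintype Ω] (w : Ω → ℝ) {f g h : Ω → ℝ}
    (hfgh : ∀ x, f x = g x + h x) : ev w f = ev w g + ev w h := by
  unfold ev
  rw [← Finset.sum_add_distrib]
  exact Finset.sum_congr rfl fun x _ => by rw [hfgh x, mul_add]

set_option maxHeartbeats 2000000 in
theorem stmt1 {Ω : Type*} [Fintype Ω] (w y ps pq : Ω → ℝ)
    (hw : ∀ x, 0 ≤ w x) (hw1 : ∑ x, w x = 1)
    (hy : ∀ x, y x = 0 ∨ y x = 1)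
    (hps : ∀ x, ps x = 0 ∨ ps x = 1)
    (hpq : ∀ x, pq x = 0 ∨ pq x = 1)
    -- conditional independence of p_s and p_q given y = 1 and given y = 0
    (hci1 : ev w (fun x => ps x * pq x * y x) * ev w y
      = ev w (fun x => ps x * y x) * ev w (fun x => pq x * y x))
    (hci0 : ev w (fun x => ps x * pq x * (1 - y x)) * ev w (fun x => 1 - y x)
      = ev w (fun x => ps x * (1 - y x)) * ev w (fun x => pq x * (1 - y x)))
    -- no worse than random (cross-multiplied conditional probabilities)
    (hrs : ev w (fun x => ps x * (1 - y x)) * ev w y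
      ≤ ev w (fun x => ps x * y x) * ev w (fun x => 1 - y x))
    (hrq : ev w (fun x => pq x * (1 - y x)) * ev w y
      ≤ ev w (fun x => pq x * y x) * ev w (fun x => 1 - y x))
    -- P(p_q = 0) > 0 and P(p_s = 0) > 0
    (hq0 : 0 < ev w (fun x => 1 - pq x))
    (hs0 : 0 < ev w (fun x => 1 - ps x)) :
    ev w (fun x => ps x * pq x * (1 - y x))
      ≤ (ev w (fun x => ps x * (1 - pq x)) / ev w (fun x => 1 - pq x))
        * (ev w (fun x => pq x * (1 - ps x)) / ev w (fun x => 1 - ps x))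
    ∧ ev w (fun x => ps x * pq x * y x)
      ≥ ev w (fun x => ps x * pq x)
        - (ev w (fun x => ps x * (1 - pq x)) / ev w (fun x => 1 - pq x))
          * (ev w (fun x => pq x * (1 - ps x)) / ev w (fun x => 1 - ps x)) := by
  have hy' : ∀ x, 0 ≤ y x ∧ y x ≤ 1 := fun x => by rcases hy x with h | h <;> norm_num [h]
  have hps' : ∀ x, 0 ≤ ps x ∧ ps x ≤ 1 := fun x => by rcases hps x with h | h <;> norm_num [h]
  have hpq' : ∀ x, 0 ≤ pq x ∧ pq x ≤ 1 := fun x => by rcases hpq x with h | h <;> norm_num [h]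
  set T := ev w (fun x => ps x * pq x * y x) with hT
  set FP := ev w (fun x => ps x * pq x * (1 - y x)) with hFP
  set Pm := ev w y with hPm
  set N0 := ev w (fun x => 1 - y x) with hN0
  set SY := ev w (fun x => ps x * y x) with hSY
  set QY := ev w (fun x => pq x * y x) with hQY
  set A0 := ev w (fun x => ps x * (1 - y x)) with hA0
  set B0 := ev w (fun x => pq x * (1 - y x)) with hB0
  set al := ev w (fun x => 1 - pq x) with hal
  set be := ev w (fun x => 1 - ps x) with hbe
  set A := ev w (fun x => ps x * (1 - pq x)) with hA
  set B := ev w (fun x => pq x * (1 - ps x)) with hB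
  set SQ := ev w (fun x => ps x * pq x) with hSQ
  set c1 := ev w (fun x => ps x * (1 - pq x) * y x) with hc1
  set c0 := ev w (fun x => ps x * (1 - pq x) * (1 - y x)) with hc0
  set d1 := ev w (fun x => (1 - pq x) * y x) with hd1
  set d0 := ev w (fun x => (1 - pq x) * (1 - y x)) with hd0
  set c1' := ev w (fun x => pq x * (1 - ps x) * y x) with hc1'
  set c0' := ev w (fun x => pq x * (1 - ps x) * (1 - y x)) with hc0'
  set d1' := ev w (fun x => (1 - ps x) * y x) with hd1'
  set d0' := ev w (fun x => (1 - ps x) * (1 - y x)) with hd0'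
  -- splits
  have s1 : SY = T + c1 := ev_split w (fun x => by ring)
  have s2 : Pm = QY + d1 := ev_split w (fun x => by ring)
  have s3 : A0 = FP + c0 := ev_split w (fun x => by ring)
  have s4 : N0 = B0 + d0 := ev_split w (fun x => by ring)
  have s5 : A = c1 + c0 := ev_split w (fun x => by ring)
  have s6 : al = d1 + d0 := ev_split w (fun x => by ring)
  have s1' : QY = T + c1' := ev_split w (fun x => by ring)
  have s2' : Pm = SY + d1' := ev_split w (fun x => by ring)
  have s3' : B0 = FP + c0' := ev_split w (fun x => by ring)
  have s4' : N0 = A0 + d0' := ev_split w (fun x => by ring)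
  have s5' : B = c1' + c0' := ev_split w (fun x => by ring)
  have s6' : be = d1' + d0' := ev_split w (fun x => by ring)
  have s7 : SQ = T + FP := ev_split w (fun x => by ring)
  have s8 : (1 : ℝ) = Pm + N0 := by
    have h1 : ev w (fun _ => (1 : ℝ)) = Pm + N0 := ev_split w (fun x => by ring)
    rw [← h1]; simp [ev, hw1]
  -- nonnegativity
  have nn : ∀ {f : Ω → ℝ}, (∀ x, 0 ≤ f x) → 0 ≤ ev w f := fun h => ev_nonneg hw h
  have hT0 : 0 ≤ T := nn fun x => by
    exact mul_nonneg (mul_nonneg (hps' x).1 (hpq' x).1) (hy' x).1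
  have hFP0 : 0 ≤ FP := nn fun x => by
    exact mul_nonneg (mul_nonneg (hps' x).1 (hpq' x).1) (by linarith [(hy' x).2])
  have hc10 : 0 ≤ c1 := nn fun x =>
    mul_nonneg (mul_nonneg (hps' x).1 (by linarith [(hpq' x).2])) (hy' x).1
  have hc00 : 0 ≤ c0 := nn fun x =>
    mul_nonneg (mul_nonneg (hps' x).1 (by linarith [(hpq' x).2])) (by linarith [(hy' x).2])
  have hd10 : 0 ≤ d1 := nn fun x =>
    mul_nonneg (by linarith [(hpq' x).2]) (hy' x).1
  have hd00 : 0 ≤ d0 := nn fun x =>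
    mul_nonneg (by linarith [(hpq' x).2]) (by linarith [(hy' x).2])
  have hc10' : 0 ≤ c1' := nn fun x =>
    mul_nonneg (mul_nonneg (hpq' x).1 (by linarith [(hps' x).2])) (hy' x).1
  have hc00' : 0 ≤ c0' := nn fun x =>
    mul_nonneg (mul_nonneg (hpq' x).1 (by linarith [(hps' x).2])) (by linarith [(hy' x).2])
  have hd10' : 0 ≤ d1' := nn fun x =>
    mul_nonneg (by linarith [(hps' x).2]) (hy' x).1
  have hd00' : 0 ≤ d0' := nn fun x =>
    mul_nonneg (by linarith [(hps' x).2]) (by linarith [(hy' x).2])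
  have hQY0 : 0 ≤ QY := nn fun x => mul_nonneg (hpq' x).1 (hy' x).1
  have hSY0 : 0 ≤ SY := nn fun x => mul_nonneg (hps' x).1 (hy' x).1
  have hA00 : 0 ≤ A0 := nn fun x => mul_nonneg (hps' x).1 (by linarith [(hy' x).2])
  have hB00 : 0 ≤ B0 := nn fun x => mul_nonneg (hpq' x).1 (by linarith [(hy' x).2])
  have hPm0 : 0 ≤ Pm := nn fun x => (hy' x).1
  have hN00 : 0 ≤ N0 := nn fun x => by linarith [(hy' x).2]
  have hA0' : 0 ≤ A := by rw [s5]; linarith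
  have hB0' : 0 ≤ B := by rw [s5']; linarith
  -- FP ≤ N0
  clear_value T FP Pm N0 SY QY A0 B0 al be A B SQ c1 c0 d1 d0 c1' c0' d1' d0'
  have hFPN0 : FP ≤ N0 := by linarith [s3, s4']
  -- claim 1 : A0 * al ≤ A * N0
  have key1 : c1 * Pm = SY * d1 := by linear_combination (-1 : ℝ) * hci1 - Pm * s1 + SY * s2
  have key1' : c1' * Pm = QY * d1' := by linear_combination (-1 : ℝ) * hci1 - Pm * s1' + QY * s2'
  have claim1 : A0 * al ≤ A * N0 := by
    have hcd : c0 * N0 = A0 * d0 := by linear_combination (-1 : ℝ) * hci0 - N0 * s3 + A0 * s4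
    have hmain : A0 * d1 ≤ c1 * N0 := by
      rcases eq_or_lt_of_le hPm0 with hP | hP
      · have hd1z : d1 = 0 := by linarith [s2]
        rw [hd1z, mul_zero]; exact mul_nonneg hc10 hN00
      · have f : A0 * Pm * d1 ≤ SY * N0 * d1 := mul_le_mul_of_nonneg_right hrs hd10
        have e : c1 * Pm * N0 = SY * d1 * N0 := by rw [key1]
        have h1 : A0 * d1 * Pm ≤ c1 * N0 * Pm := by linarith [f, e]
        exact le_of_mul_le_mul_right h1 hP
    have e1 : A0 * al = A0 * d1 + A0 * d0 := by rw [s6]; ring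
    have e2 : A * N0 = c1 * N0 + c0 * N0 := by rw [s5]; ring
    linarith [hcd, hmain]
  -- claim 2 : B0 * be ≤ B * N0
  have claim2 : B0 * be ≤ B * N0 := by
    have hcd : c0' * N0 = B0 * d0' := by linear_combination (-1 : ℝ) * hci0 - N0 * s3' + B0 * s4'
    have hmain : B0 * d1' ≤ c1' * N0 := by
      rcases eq_or_lt_of_le hPm0 with hP | hP
      · have hd1z : d1' = 0 := by linarith [s2']
        rw [hd1z, mul_zero]; exact mul_nonneg hc10' hN00
      · have f : B0 * Pm * d1' ≤ QY * N0 * d1' := mul_le_mul_of_nonneg_right hrq hd10'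
        have e : c1' * Pm * N0 = QY * d1' * N0 := by rw [key1']
        have h1 : B0 * d1' * Pm ≤ c1' * N0 * Pm := by linarith [f, e]
        exact le_of_mul_le_mul_right h1 hP
    have e1 : B0 * be = B0 * d1' + B0 * d0' := by rw [s6']; ring
    have e2 : B * N0 = c1' * N0 + c0' * N0 := by rw [s5']; ring
    linarith [hcd, hmain]
  -- main inequality
  have hN01 : N0 ≤ 1 := by linarith [s8]
  have main : FP * (al * be) ≤ A * B := by
    rcases eq_or_lt_of_le hN00 with hN | hN
    · have : FP = 0 := le_antisymm (by linarith) hFP0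
      rw [this, zero_mul]; exact mul_nonneg hA0' hB0'
    · have h1 : (A0 * al) * (B0 * be) ≤ (A * N0) * (B * N0) :=
        mul_le_mul claim1 claim2 (mul_nonneg hB00 (le_of_lt hs0)) (mul_nonneg hA0' hN.le)
      have e2 : A0 * al * (B0 * be) = FP * (al * be) * N0 := by
        linear_combination (-(al * be)) * hci0
      have h2 : FP * (al * be) * N0 ≤ A * B * N0 * N0 := by linarith [h1, e2]
      have h4 : FP * (al * be) ≤ A * B * N0 := (mul_le_mul_iff_of_pos_right hN).mp h2
      have h5 : A * B * N0 ≤ A * B * 1 :=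
        mul_le_mul_of_nonneg_left hN01 (mul_nonneg hA0' hB0')
      linarith [h4, h5]
  have fst : FP ≤ A / al * (B / be) := by
    rw [div_mul_div_comm, le_div_iff₀ (by positivity)]
    exact main
  exact ⟨fst, by rw [ge_iff_le]; linarith [s7]⟩
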